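/- In the category HAsm of Herbrand assemblies over K₁: every morphism factors as a super epi followed by a monomorphism; every super epi is a regular epimorphism; and super epis are stable under pullback, i.e., the pullback of a super epi along any morphism is again a super epi. -/

import Mathlib

open CategoryTheory Encodable Denumerable

namespace Herbrand

/-- Kleene application in Kleene's first pca `K₁`: `e · n`. -/
def kap (e n : ℕ) : Part ℕ := Nat.Partrec.Code.eval (ofNat Nat.Partrec.Code e) n

/-- `kapIn r n S` : `r · n` is defined and its value lies in `S`. -/
def kapIn (r n : ℕ) (S : Set ℕ) : Prop := ∃ v ∈ kap r n, v ∈ S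

/-- The list coded by a natural number (canonical bijection `ℕ ≃ List ℕ`). -/
def toL (n : ℕ) : List ℕ := ofNat (List ℕ) n

/-- The code of a list of natural numbers. -/
def ofL (l : List ℕ) : ℕ := encode l

@[simp] lemma toL_ofL (l : List ℕ) : toL (ofL l) = l := ofNat_encode l

/-- `!A` : the set of codes of lists all of whose entries lie in `A`. -/
def bang (A : Set ℕ) : Set ℕ := {n | ∀ x ∈ toL n, x ∈ A}

/-- `m ⪯ n` : every entry of the list coded by `m` is an entry of the list coded by `n`. -/
def sle (m n : ℕ) : Prop := ∀ x ∈ toL m, x ∈ toL n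

lemma sle_refl (m : ℕ) : sle m m := fun _ hx => hx

lemma sle_trans {m n k : ℕ} (h1 : sle m n) (h2 : sle n k) : sle m k :=
  fun x hx => h2 x (h1 x hx)

/-- `S` is upward closed in `!A`. -/
def UpwardClosedIn (A S : Set ℕ) : Prop :=
  ∀ m ∈ S, ∀ n ∈ bang A, sle m n → n ∈ S

/-- `↑_{!A} S` : the set of `n ∈ !A` with `m ⪯ n` for some `m ∈ S`. -/
def upClo (A S : Set ℕ) : Set ℕ := {n | n ∈ bang A ∧ ∃ m ∈ S, sle m n}

lemma mem_bang_univ (n : ℕ) : n ∈ bang Set.univ := fun x _ => Set.mem_univ x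

/-- From a partial recursive function we get a `K₁`-code for it. -/
theorem exists_kap_eq {f : ℕ →. ℕ} (hf : Nat.Partrec f) : ∃ e, ∀ n, kap e n = f n := by
  obtain ⟨c, hc⟩ := Nat.Partrec.Code.exists_code.mp hf
  exact ⟨encode c, fun n => by simp [kap, hc]⟩


/-- A Herbrand assembly over `K₁`. -/
structure HAsmObj where
  carrier : Type
  real : Set ℕ
  rz : carrier → Set ℕ
  rz_sub : ∀ a, rz a ⊆ bang real
  rz_ne : ∀ a, (rz a).Nonempty
  rz_up : ∀ a, UpwardClosedIn real (rz a)

/-- `r ∈ ℕ` tracks the function `f` between the underlying sets of two Herbrand assemblies. -/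
def Tracks (B A : HAsmObj) (f : B.carrier → A.carrier) (r : ℕ) : Prop :=
  (∀ m ∈ bang B.real, kapIn r m (bang A.real)) ∧
  ∀ b : B.carrier, ∀ m ∈ B.rz b, kapIn r m (A.rz (f b))

/-- A morphism of Herbrand assemblies: a tracked function. -/
structure HHom (B A : HAsmObj) where
  toFun : B.carrier → A.carrier
  tracked : ∃ r, Tracks B A toFun r

theorem HHom.ext' {B A : HAsmObj} {f g : HHom B A} (h : f.toFun = g.toFun) : f = g := by
  cases f; cases g; simpa using h

theorem tracks_id_fun (B A : HAsmObj) (f : B.carrier → A.carrier)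
    (h1 : ∀ m ∈ bang B.real, m ∈ bang A.real)
    (h2 : ∀ b : B.carrier, ∀ m ∈ B.rz b, m ∈ A.rz (f b)) : ∃ r, Tracks B A f r := by
  obtain ⟨e, he⟩ := exists_kap_eq (Nat.Partrec.of_primrec Nat.Primrec.id)
  exact ⟨e, fun m hm => ⟨m, by simp [he], h1 m hm⟩,
    fun b m hm => ⟨m, by simp [he], h2 b m hm⟩⟩

theorem tracked_id (A : HAsmObj) : ∃ r, Tracks A A id r :=
  tracks_id_fun A A id (fun _ h => h) (fun _ _ h => h)

theorem tracked_comp {C B A : HAsmObj} {f : C.carrier → B.carrier} {g : B.carrier → A.carrier}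
    (hf : ∃ r, Tracks C B f r) (hg : ∃ s, Tracks B A g s) : ∃ t, Tracks C A (g ∘ f) t := by
  obtain ⟨r, hr1, hr2⟩ := hf
  obtain ⟨s, hs1, hs2⟩ := hg
  refine ⟨encode (Nat.Partrec.Code.comp (ofNat Nat.Partrec.Code s) (ofNat Nat.Partrec.Code r)),
    ?_, ?_⟩
  · intro m hm
    obtain ⟨v, hv, hv'⟩ := hr1 m hm
    obtain ⟨w, hw, hw'⟩ := hs1 v hv'
    exact ⟨w, by
      simp only [kap, Nat.Partrec.Code.eval, ofNat_encode]; exact Part.mem_bind_iff.mpr ⟨v, hv, hw⟩, hw'⟩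
  · intro c m hm
    obtain ⟨v, hv, hv'⟩ := hr2 c m hm
    obtain ⟨w, hw, hw'⟩ := hs2 (f c) v hv'
    exact ⟨w, by
      simp only [kap, Nat.Partrec.Code.eval, ofNat_encode]; exact Part.mem_bind_iff.mpr ⟨v, hv, hw⟩, hw'⟩

/-- The category `HAsm` of Herbrand assemblies over `K₁`. -/
instance : Category HAsmObj where
  Hom B A := HHom B A
  id A := ⟨id, tracked_id A⟩
  comp f g := ⟨g.toFun ∘ f.toFun, tracked_comp f.tracked g.tracked⟩
  id_comp f := HHom.ext' rfl
  comp_id f := HHom.ext' rfl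
  assoc f g h := HHom.ext' rfl


/-- The Herbrand assembly `∇X = (X, ℕ, x ↦ !ℕ)`. -/
def nablaObj (X : Type) : HAsmObj where
  carrier := X
  real := Set.univ
  rz _ := bang Set.univ
  rz_sub _ := fun _ h => h
  rz_ne _ := ⟨0, mem_bang_univ 0⟩
  rz_up _ := fun _ _ n hn _ => hn

/-- The functor `∇ : Set → HAsm`. -/
def Nabla : Type ⥤ HAsmObj where
  obj := nablaObj
  map f := ⟨f, tracks_id_fun _ _ f (fun _ h => h) (fun _ _ h => h)⟩
  map_id _ := HHom.ext' rfl
  map_comp _ _ := HHom.ext' rfl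

/-- The underlying-set functor `Γ : HAsm → Set`. -/
def Gamma : HAsmObj ⥤ Type where
  obj A := A.carrier
  map f := TypeCat.ofHom f.toFun

/-- The realizability structure of the natural numbers object: `ν n = ↑_{!ℕ} {⟨n⟩}`. -/
def nuN (n : ℕ) : Set ℕ := upClo Set.univ {ofL [n]}

/-- The natural numbers object `N = (ℕ, ℕ, ν)` of `HAsm`. -/
def NObj : HAsmObj where
  carrier := ℕ
  real := Set.univ
  rz := nuN
  rz_sub _ := fun _ hm => hm.1
  rz_ne n := ⟨ofL [n], mem_bang_univ _, ofL [n], rfl, sle_refl _⟩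
  rz_up _ := fun m hm k hk hmk => ⟨hk, hm.2.choose, hm.2.choose_spec.1,
    sle_trans hm.2.choose_spec.2 hmk⟩

/-- The terminal object `1 = ({*}, ℕ, * ↦ !ℕ)` of `HAsm`. -/
def oneObj : HAsmObj := nablaObj PUnit

/-- The zero morphism `0 : 1 ⟶ N`. -/
def zeroH : oneObj ⟶ NObj := by
  refine ⟨fun _ => (0 : ℕ), ?_⟩
  obtain ⟨e, he⟩ := exists_kap_eq (Nat.Partrec.of_primrec (Nat.Primrec.const (ofL [0])))
  exact ⟨e, fun m _ => ⟨ofL [0], by simp [he], mem_bang_univ _⟩,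
    fun b m _ => ⟨ofL [0], by simp [he], mem_bang_univ _, ofL [0], rfl, sle_refl _⟩⟩

/-- The successor morphism `s : N ⟶ N`. -/
def succH : NObj ⟶ NObj := by
  refine ⟨(Nat.succ : ℕ → ℕ), ?_⟩
  have hp : Primrec (fun m : ℕ => ofL ((toL m).map Nat.succ)) :=
    Primrec.encode.comp ((Primrec.ofNat (List ℕ)).list_map
      ((Primrec.succ.comp Primrec.snd).to₂))
  obtain ⟨e, he⟩ := exists_kap_eq (Nat.Partrec.of_primrec (Primrec.nat_iff.mp hp))
  refine ⟨e, fun m _ => ⟨ofL ((toL m).map Nat.succ), by simp [he], mem_bang_univ _⟩, ?_⟩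
  rintro (n : ℕ) m hm
  refine ⟨ofL ((toL m).map Nat.succ), by simp [he], mem_bang_univ _, ofL [n + 1], rfl, ?_⟩
  intro x hx
  have hn : n ∈ toL m := hm.2.choose_spec.2 n (by
    have : hm.2.choose = ofL [n] := hm.2.choose_spec.1
    rw [this]; simp)
  have hx' : x = n + 1 := by simpa using hx
  subst hx'
  simp only [toL_ofL, List.mem_map]
  exact ⟨n, hn, rfl⟩


/-- A super epi of Herbrand assemblies. -/
def SuperEpi {B A : HAsmObj} (f : B ⟶ A) : Prop :=
  ∃ r : ℕ, (∀ n ∈ bang A.real, kapIn r n (bang B.real)) ∧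
    ∀ a : A.carrier, ∀ n ∈ A.rz a, ∃ b : B.carrier, f.toFun b = a ∧ kapIn r n (B.rz b)

/- ===== Auxiliary material ===== -/

lemma kap_partrec (r : ℕ) : Nat.Partrec (kap r) :=
  Nat.Partrec.Code.exists_code.mpr ⟨ofNat Nat.Partrec.Code r, rfl⟩

lemma exists_id_code : ∃ e, ∀ n, kap e n = Part.some n := by
  obtain ⟨e, he⟩ := exists_kap_eq (Nat.Partrec.of_primrec Nat.Primrec.id)
  exact ⟨e, fun n => by simp [he]⟩

lemma exists_comp_code (r s : ℕ) : ∃ t, ∀ n, kap t n = (kap r n).bind (kap s) :=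
  ⟨encode (Nat.Partrec.Code.comp (ofNat Nat.Partrec.Code s) (ofNat Nat.Partrec.Code r)),
   fun n => by simp [kap, Nat.Partrec.Code.eval]; rfl⟩

/-- Tag-and-merge: entries of `u` doubled, entries of `v` doubled-plus-one. -/
def tagMerge (u v : ℕ) : ℕ := ofL ((toL u).map (2 * ·) ++ (toL v).map (2 * · + 1))

lemma mem_toL_tagMerge {k u v : ℕ} :
    k ∈ toL (tagMerge u v) ↔ (∃ x ∈ toL u, 2 * x = k) ∨ ∃ y ∈ toL v, 2 * y + 1 = k := by
  simp [tagMerge]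

lemma tagMerge_primrec : Primrec₂ tagMerge := by
  have hA : Primrec fun p : ℕ × ℕ => (toL p.1).map (2 * ·) :=
    Primrec.list_map ((Primrec.ofNat (List ℕ)).comp Primrec.fst)
      ((Primrec.nat_mul.comp (Primrec.const 2) Primrec.snd).to₂)
  have hB : Primrec fun p : ℕ × ℕ => (toL p.2).map (2 * · + 1) :=
    Primrec.list_map ((Primrec.ofNat (List ℕ)).comp Primrec.snd)
      ((Primrec.succ.comp (Primrec.nat_mul.comp (Primrec.const 2) Primrec.snd)).to₂)
  exact (Primrec.encode.comp (Primrec.list_append.comp hA hB)).to₂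

/-- Extract entries tagged as even (the `X`-part). -/
def evens (n : ℕ) : ℕ := ofL ((toL n).filterMap fun k => if k % 2 = 0 then some (k / 2) else none)

/-- Extract entries tagged as odd (the `Y`-part). -/
def odds (n : ℕ) : ℕ := ofL ((toL n).filterMap fun k => if k % 2 = 1 then some (k / 2) else none)

lemma mem_toL_evens {x n : ℕ} : x ∈ toL (evens n) ↔ 2 * x ∈ toL n := by
  simp only [evens, toL_ofL, List.mem_filterMap]
  constructor
  · rintro ⟨k, hk, hx⟩
    split_ifs at hx with h
    · obtain rfl : k / 2 = x := by simpa using hx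
      have : 2 * (k / 2) = k := by omega
      rwa [this]
  · intro h
    refine ⟨2 * x, h, ?_⟩
    rw [if_pos (by omega)]
    congr 1
    omega

lemma mem_toL_odds {y n : ℕ} : y ∈ toL (odds n) ↔ 2 * y + 1 ∈ toL n := by
  simp only [odds, toL_ofL, List.mem_filterMap]
  constructor
  · rintro ⟨k, hk, hy⟩
    split_ifs at hy with h
    · obtain rfl : k / 2 = y := by simpa using hy
      have : 2 * (k / 2) + 1 = k := by omega
      rwa [this]
  · intro h
    refine ⟨2 * y + 1, h, ?_⟩
    rw [if_pos (by omega)]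
    congr 1
    omega

lemma evens_primrec : Primrec evens := by
  refine Primrec.encode.comp (Primrec.listFilterMap (Primrec.ofNat (List ℕ)) ?_)
  refine Primrec.ite ?_ (Primrec.option_some.comp
    (Primrec.nat_div.comp Primrec.snd (Primrec.const 2))) (Primrec.const none)
  exact Primrec.eq.comp (Primrec.nat_mod.comp Primrec.snd (Primrec.const 2)) (Primrec.const 0)

lemma odds_primrec : Primrec odds := by
  refine Primrec.encode.comp (Primrec.listFilterMap (Primrec.ofNat (List ℕ)) ?_)
  refine Primrec.ite ?_ (Primrec.option_some.comp
    (Primrec.nat_div.comp Primrec.snd (Primrec.const 2))) (Primrec.const none)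
  exact Primrec.eq.comp (Primrec.nat_mod.comp Primrec.snd (Primrec.const 2)) (Primrec.const 1)

lemma exists_evens_code : ∃ e, ∀ n, kap e n = Part.some (evens n) := by
  obtain ⟨e, he⟩ := exists_kap_eq (Nat.Partrec.of_primrec (Primrec.nat_iff.mp evens_primrec))
  exact ⟨e, fun n => by simp [he]⟩

lemma exists_odds_code : ∃ e, ∀ n, kap e n = Part.some (odds n) := by
  obtain ⟨e, he⟩ := exists_kap_eq (Nat.Partrec.of_primrec (Primrec.nat_iff.mp odds_primrec))
  exact ⟨e, fun n => by simp [he]⟩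

lemma exists_rho_code (sf rg tl : ℕ) :
    ∃ ρ, ∀ n, kap ρ n = (kap sf n).bind fun u => (kap rg u).bind fun v =>
      kap tl (tagMerge n v) := by
  apply exists_kap_eq
  apply Partrec.nat_iff.mp
  have htl : Partrec (kap tl) := Partrec.nat_iff.mpr (kap_partrec tl)
  have h2 : Partrec fun q : (ℕ × ℕ) × ℕ => kap tl (tagMerge q.1.1 q.2) :=
    htl.comp (tagMerge_primrec.comp (Primrec.fst.comp Primrec.fst) Primrec.snd).to_comp
  have h1 : Partrec fun p : ℕ × ℕ => (kap rg p.2).bind fun v => kap tl (tagMerge p.1 v) :=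
    ((Partrec.nat_iff.mpr (kap_partrec rg)).comp Computable.snd).bind h2.to₂
  exact (Partrec.nat_iff.mpr (kap_partrec sf)).bind h1.to₂

lemma mono_of_injective {B A : HAsmObj} (h : B ⟶ A) (hinj : Function.Injective h.toFun) :
    Mono h :=
  ⟨fun {Z} u v huv => HHom.ext' (funext fun z =>
    hinj (congrFun (congrArg HHom.toFun huv) z))⟩

open CategoryTheory.Limits in
/-- every morphism factors as a super epi followed by a mono; super epis are
regular epis; and super epis are stable under pullback. -/
theorem superEpi_facts :
    (∀ {B A : HAsmObj} (f : B ⟶ A),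
      ∃ (C : HAsmObj) (g : B ⟶ C) (h : C ⟶ A), SuperEpi g ∧ Mono h ∧ g ≫ h = f) ∧
    (∀ {B A : HAsmObj} (f : B ⟶ A), SuperEpi f → Nonempty (RegularEpi f)) ∧
    (∀ {P X Y Z : HAsmObj} (fst : P ⟶ X) (snd : P ⟶ Y) (f : X ⟶ Z) (g : Y ⟶ Z),
      IsPullback fst snd f g → SuperEpi g → SuperEpi fst) := by
  refine ⟨?_, ?_, ?_⟩
  -- Part 1: factorization as super epi followed by mono
  · intro B A f
    obtain ⟨e, he⟩ := exists_id_code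
    obtain ⟨rf, hrf1, hrf2⟩ := f.tracked
    set C : HAsmObj := {
      carrier := {a : A.carrier // ∃ b, f.toFun b = a}
      real := B.real
      rz := fun c => {n | ∃ b, f.toFun b = c.val ∧ n ∈ B.rz b}
      rz_sub := fun _ n hn => by obtain ⟨b, -, h⟩ := hn; exact B.rz_sub b h
      rz_ne := fun c => by
        obtain ⟨b, hb⟩ := c.2
        obtain ⟨n, hn⟩ := B.rz_ne b
        exact ⟨n, b, hb, hn⟩
      rz_up := fun _ m hm n hn hle => by
        obtain ⟨b, hb, hmb⟩ := hm
        exact ⟨b, hb, B.rz_up b m hmb n hn hle⟩ } with hC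
    refine ⟨C,
      ⟨fun b => ⟨f.toFun b, b, rfl⟩,
        tracks_id_fun B C _ (fun _ hm => hm) (fun b m hm => ⟨b, rfl, hm⟩)⟩,
      ⟨fun c => c.val, rf, hrf1, ?_⟩, ?_, ?_, ?_⟩
    · intro c m hm
      obtain ⟨b, hb, hmb⟩ := hm
      have h2 := hrf2 b m hmb
      rwa [hb] at h2
    · refine ⟨e, fun n hn => ⟨n, by simp [he], hn⟩, fun c n hn => ?_⟩
      obtain ⟨b, hb, hnb⟩ := hn
      exact ⟨b, Subtype.ext hb, n, by simp [he], hnb⟩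
    · exact mono_of_injective _ Subtype.val_injective
    · exact HHom.ext' rfl
  -- Part 2: super epis are regular epis
  · rintro B A f ⟨r, hr1, hr2⟩
    have hsurj : ∀ a, ∃ b, f.toFun b = a := fun a => by
      obtain ⟨n, hn⟩ := A.rz_ne a
      obtain ⟨b, hb, -⟩ := hr2 a n hn
      exact ⟨b, hb⟩
    choose σ hσ using hsurj
    set W : HAsmObj := {
      carrier := {p : B.carrier × B.carrier // f.toFun p.1 = f.toFun p.2}
      real := B.real
      rz := fun p => {n | n ∈ bang B.real ∧ (∃ m ∈ B.rz p.val.1, sle m n) ∧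
        ∃ m' ∈ B.rz p.val.2, sle m' n}
      rz_sub := fun _ _ hn => hn.1
      rz_ne := fun p => by
        obtain ⟨m, hm⟩ := B.rz_ne p.val.1
        obtain ⟨m', hm'⟩ := B.rz_ne p.val.2
        refine ⟨ofL (toL m ++ toL m'), ?_, ⟨m, hm, ?_⟩, ⟨m', hm', ?_⟩⟩
        · intro x hx
          rw [toL_ofL] at hx
          rcases List.mem_append.mp hx with h | h
          · exact B.rz_sub _ hm x h
          · exact B.rz_sub _ hm' x h
        · intro x hx; rw [toL_ofL]; exact List.mem_append.mpr (Or.inl hx)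
        · intro x hx; rw [toL_ofL]; exact List.mem_append.mpr (Or.inr hx)
      rz_up := fun _ m hm n hn hle =>
        ⟨hn, ⟨hm.2.1.choose, hm.2.1.choose_spec.1, sle_trans hm.2.1.choose_spec.2 hle⟩,
          ⟨hm.2.2.choose, hm.2.2.choose_spec.1, sle_trans hm.2.2.choose_spec.2 hle⟩⟩ } with hWdef
    set wl : W ⟶ B := ⟨fun p => p.val.1,
      tracks_id_fun W B _ (fun _ h => h)
        (fun p m hm => B.rz_up _ hm.2.1.choose hm.2.1.choose_spec.1 m hm.1
          hm.2.1.choose_spec.2)⟩ with hwl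
    set wr : W ⟶ B := ⟨fun p => p.val.2,
      tracks_id_fun W B _ (fun _ h => h)
        (fun p m hm => B.rz_up _ hm.2.2.choose hm.2.2.choose_spec.1 m hm.1
          hm.2.2.choose_spec.2)⟩ with hwr
    have wcomm : wl ≫ f = wr ≫ f := HHom.ext' (funext fun p => p.2)
    refine ⟨⟨W, wl, wr, wcomm, Cofork.IsColimit.mk' _ fun s => ?_⟩⟩
    have htr := s.π.tracked
    have hπ1 := htr.choose_spec.1
    have hπ2 := htr.choose_spec.2
    have ht := (exists_comp_code r htr.choose).choose_spec
    have hπconst : ∀ b b', f.toFun b = f.toFun b' → s.π.toFun b = s.π.toFun b' := by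
      intro b b' hbb
      exact congrFun (congrArg HHom.toFun s.condition) (⟨(b, b'), hbb⟩ : W.carrier)
    refine ⟨⟨fun a => s.π.toFun (σ a), (exists_comp_code r htr.choose).choose, ?_, ?_⟩, ?_, fun {m} hm => ?_⟩
    · intro n hn
      obtain ⟨v, hv, hv'⟩ := hr1 n hn
      obtain ⟨w2, hw, hw'⟩ := hπ1 v hv'
      exact ⟨w2, by rw [ht]; exact Part.mem_bind_iff.mpr ⟨v, hv, hw⟩, hw'⟩
    · intro a n hn
      obtain ⟨b, hb, v, hv, hv'⟩ := hr2 a n hn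
      obtain ⟨w2, hw, hw'⟩ := hπ2 b v hv'
      refine ⟨w2, by rw [ht]; exact Part.mem_bind_iff.mpr ⟨v, hv, hw⟩, ?_⟩
      have heq : s.π.toFun (σ a) = s.π.toFun b := hπconst _ _ (by rw [hσ a, hb])
      show w2 ∈ s.pt.rz (s.π.toFun (σ a))
      rw [heq]
      exact hw'
    · exact HHom.ext' (funext fun b => hπconst _ _ (hσ (f.toFun b)))
    · refine HHom.ext' (funext fun a => ?_)
      have h1 := congrFun (congrArg HHom.toFun hm) (σ a)
      have h2 : f.toFun (σ a) = a := hσ a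
      calc m.toFun a = m.toFun (f.toFun (σ a)) := by rw [h2]
        _ = s.π.toFun (σ a) := h1
  -- Part 3: super epis are stable under pullback
  · rintro P X Y Z fst snd f g sq hg
    obtain ⟨rg, hrg1, hrg2⟩ := hg
    obtain ⟨sf, hsf1, hsf2⟩ := f.tracked
    obtain ⟨ef, hef⟩ := exists_evens_code
    obtain ⟨eo, heo⟩ := exists_odds_code
    set Q : HAsmObj := {
      carrier := {p : X.carrier × Y.carrier // f.toFun p.1 = g.toFun p.2}
      real := (fun x => 2 * x) '' X.real ∪ (fun y => 2 * y + 1) '' Y.real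
      rz := fun p => {n | n ∈ bang ((fun x => 2 * x) '' X.real ∪ (fun y => 2 * y + 1) '' Y.real) ∧
        (∃ m ∈ X.rz p.val.1, ∀ x ∈ toL m, 2 * x ∈ toL n) ∧
        ∃ m' ∈ Y.rz p.val.2, ∀ y ∈ toL m', 2 * y + 1 ∈ toL n}
      rz_sub := fun _ _ hn => hn.1
      rz_ne := fun p => by
        obtain ⟨m, hm⟩ := X.rz_ne p.val.1
        obtain ⟨m', hm'⟩ := Y.rz_ne p.val.2
        refine ⟨tagMerge m m', ?_, ⟨m, hm, fun x hx => ?_⟩, ⟨m', hm', fun y hy => ?_⟩⟩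
        · intro k hk
          rcases mem_toL_tagMerge.mp hk with ⟨x, hx, rfl⟩ | ⟨y, hy, rfl⟩
          · exact Set.mem_union_left _ ⟨x, X.rz_sub _ hm x hx, rfl⟩
          · exact Set.mem_union_right _ ⟨y, Y.rz_sub _ hm' y hy, rfl⟩
        · exact mem_toL_tagMerge.mpr (Or.inl ⟨x, hx, rfl⟩)
        · exact mem_toL_tagMerge.mpr (Or.inr ⟨y, hy, rfl⟩)
      rz_up := fun _ m hm n hn hle =>
        ⟨hn, ⟨hm.2.1.choose, hm.2.1.choose_spec.1,
            fun x hx => hle _ (hm.2.1.choose_spec.2 x hx)⟩,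
          ⟨hm.2.2.choose, hm.2.2.choose_spec.1,
            fun y hy => hle _ (hm.2.2.choose_spec.2 y hy)⟩⟩ } with hQdef
    have hQbang_ev : ∀ n ∈ bang Q.real, evens n ∈ bang X.real := by
      intro n hn x hx
      rcases hn _ (mem_toL_evens.mp hx) with ⟨x', hx', he2⟩ | ⟨y', hy', he2⟩
      · have he3 : 2 * x' = 2 * x := he2
        obtain rfl : x' = x := by omega
        exact hx'
      · have he3 : 2 * y' + 1 = 2 * x := he2
        omega
    have hQbang_od : ∀ n ∈ bang Q.real, odds n ∈ bang Y.real := by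
      intro n hn y hy
      rcases hn _ (mem_toL_odds.mp hy) with ⟨x', hx', he2⟩ | ⟨y', hy', he2⟩
      · have he3 : 2 * x' = 2 * y + 1 := he2
        omega
      · have he3 : 2 * y' + 1 = 2 * y + 1 := he2
        obtain rfl : y' = y := by omega
        exact hy'
    set qfst : Q ⟶ X := ⟨fun p => p.val.1, ef,
      fun n hn => ⟨evens n, by simp [hef], hQbang_ev n hn⟩,
      fun p n hn => ⟨evens n, by simp [hef],
        X.rz_up _ hn.2.1.choose hn.2.1.choose_spec.1 (evens n) (hQbang_ev n hn.1)
          (fun x hx => mem_toL_evens.mpr (hn.2.1.choose_spec.2 x hx))⟩⟩ with hqf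
    set qsnd : Q ⟶ Y := ⟨fun p => p.val.2, eo,
      fun n hn => ⟨odds n, by simp [heo], hQbang_od n hn⟩,
      fun p n hn => ⟨odds n, by simp [heo],
        Y.rz_up _ hn.2.2.choose hn.2.2.choose_spec.1 (odds n) (hQbang_od n hn.1)
          (fun y hy => mem_toL_odds.mpr (hn.2.2.choose_spec.2 y hy))⟩⟩ with hqs
    have comm : qfst ≫ f = qsnd ≫ g := HHom.ext' (funext fun p => p.2)
    set l : Q ⟶ P := sq.lift qfst qsnd comm with hl
    obtain ⟨tl, htl1, htl2⟩ := l.tracked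
    have hlf : ∀ q : Q.carrier, fst.toFun (l.toFun q) = q.val.1 := fun q =>
      congrFun (congrArg HHom.toFun (sq.lift_fst qfst qsnd comm)) q
    obtain ⟨ρ, hρ⟩ := exists_rho_code sf rg tl
    refine ⟨ρ, ?_, ?_⟩
    · intro n hn
      obtain ⟨u, hu, hu'⟩ := hsf1 n hn
      obtain ⟨v, hv, hv'⟩ := hrg1 u hu'
      have htag : tagMerge n v ∈ bang Q.real := by
        intro k hk
        rcases mem_toL_tagMerge.mp hk with ⟨x, hx, rfl⟩ | ⟨y, hy, rfl⟩
        · exact Set.mem_union_left _ ⟨x, hn x hx, rfl⟩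
        · exact Set.mem_union_right _ ⟨y, hv' y hy, rfl⟩
      obtain ⟨w2, hw, hw'⟩ := htl1 _ htag
      refine ⟨w2, ?_, hw'⟩
      rw [hρ]
      exact Part.mem_bind_iff.mpr ⟨u, hu, Part.mem_bind_iff.mpr ⟨v, hv, hw⟩⟩
    · intro x n hn
      obtain ⟨u, hu, hu'⟩ := hsf2 x n hn
      obtain ⟨y, hy, v, hv, hv'⟩ := hrg2 (f.toFun x) u hu'
      have hq : f.toFun x = g.toFun y := hy.symm
      have htag : tagMerge n v ∈ Q.rz ⟨(x, y), hq⟩ := by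
        refine ⟨?_, ⟨n, hn, fun a ha => mem_toL_tagMerge.mpr (Or.inl ⟨a, ha, rfl⟩)⟩,
          ⟨v, hv', fun b hb => mem_toL_tagMerge.mpr (Or.inr ⟨b, hb, rfl⟩)⟩⟩
        intro k hk
        rcases mem_toL_tagMerge.mp hk with ⟨a, ha, rfl⟩ | ⟨b, hb, rfl⟩
        · exact Set.mem_union_left _ ⟨a, X.rz_sub _ hn a ha, rfl⟩
        · exact Set.mem_union_right _ ⟨b, Y.rz_sub _ hv' b hb, rfl⟩
      obtain ⟨w2, hw, hw'⟩ := htl2 ⟨(x, y), hq⟩ _ htag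
      refine ⟨l.toFun ⟨(x, y), hq⟩, hlf ⟨(x, y), hq⟩, w2, ?_, hw'⟩
      rw [hρ]
      exact Part.mem_bind_iff.mpr ⟨u, hu, Part.mem_bind_iff.mpr ⟨v, hv, hw⟩⟩

end Herbrand
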